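/- Lemma 3 (averaged consensus error is bounded under i.i.d. sampling, no momentum): Under Assumptions 1–3 and the no-momentum decentralized Adam updates run for T iterations, almost surely (1/T) · Σ_{t=1}^T Σ_{i=1}^N Σ_{d=1}^D (∇_d F_i(x_i^{(t−1)}) − ∇_d F(x̄^{(t−1)}))² ≤ (2(1+λ²)α²NL²D / ((1−λ²)²(1−β₂))) · [ (1/T)·ln(1 + R²/(ε(1−β₂))) − ln(β₂) ]. -/

import Mathlib

open Finset Matrix Polynomial MeasureTheory ProbabilityTheory


lemma sum_sub_mean_sq {N : ℕ} (hN : 0 < N) (u : Fin N → ℝ) :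
    ∑ i, (u i - (N:ℝ)⁻¹ * ∑ j, u j) ^ 2 ≤ ∑ i, (u i) ^ 2 := by
  have hNpos : (0:ℝ) < (N:ℝ) := Nat.cast_pos.mpr hN
  have hNne : (N:ℝ) ≠ 0 := hNpos.ne'
  set m := (N:ℝ)⁻¹ * ∑ j, u j with hm
  have hsum : ∑ i, u i = (N:ℝ) * m := by
    rw [hm]; field_simp
  have hexp : ∑ i, (u i - m) ^ 2 = (∑ i, (u i)^2) - (N:ℝ) * m^2 := by
    have h8 : ∀ i : Fin N, (u i - m)^2 = (u i)^2 - 2*m*(u i) + m^2 := fun i => by ring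
    rw [Finset.sum_congr rfl fun i _ => h8 i, Finset.sum_add_distrib, Finset.sum_sub_distrib,
      ← Finset.mul_sum, hsum, Finset.sum_const, Finset.card_univ, Fintype.card_fin,
      nsmul_eq_mul]
    ring
  rw [hexp]
  nlinarith [sq_nonneg m]

lemma young_sq (a b c : ℝ) (hc : 0 < c) : (a + b) ^ 2 ≤ (1 + c) * a ^ 2 + (1 + c⁻¹) * b ^ 2 := by
  have key : c * (a+b)^2 ≤ c * ((1 + c) * a ^ 2 + (1 + c⁻¹) * b ^ 2) := by
    have hci : c * c⁻¹ = 1 := mul_inv_cancel₀ hc.ne'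
    nlinarith [sq_nonneg (c*a - b)]
  exact le_of_mul_le_mul_left key hc

lemma sum_rec_bound (E U : ℕ → ℝ) (q c₀ : ℝ)
    (hE0 : E 0 = 0)
    (hrec : ∀ t, E (t + 1) ≤ q * E t + c₀ * U (t + 1)) :
    ∀ n, (1 - q) * ∑ t ∈ Finset.range (n + 1), E t
      ≤ c₀ * ∑ t ∈ Finset.range n, U (t + 1) - q * E n := by
  intro n
  induction n with
  | zero => simp [hE0]
  | succ n ih =>
    rw [Finset.sum_range_succ, Finset.sum_range_succ (f := fun t => U (t+1))]
    have h := hrec n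
    nlinarith [hrec n]

lemma adam_log_step (ε β₂ vp gg : ℝ) (hε : 0 < ε) (hβ0 : 0 < β₂) (hβ1 : β₂ ≤ 1)
    (hvp : 0 ≤ vp) (hgg : 0 ≤ gg) :
    gg / (ε + (β₂ * vp + gg))
      ≤ Real.log (ε + (β₂ * vp + gg)) - Real.log (ε + vp) - Real.log β₂ := by
  have hA : 0 < ε + vp := by linarith
  have hC : 0 < ε + β₂ * vp := by nlinarith
  have hB : 0 < ε + (β₂ * vp + gg) := by linarith
  have h1 : Real.log ((ε + β₂*vp)/(ε + (β₂*vp+gg))) ≤ (ε + β₂*vp)/(ε+(β₂*vp+gg)) - 1 :=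
    Real.log_le_sub_one_of_pos (by positivity)
  rw [Real.log_div hC.ne' hB.ne'] at h1
  have h2 : Real.log (β₂ * (ε + vp)) ≤ Real.log (ε + β₂ * vp) :=
    Real.log_le_log (by positivity) (by nlinarith)
  rw [Real.log_mul hβ0.ne' hA.ne'] at h2
  have h3 : gg / (ε + (β₂*vp+gg)) = 1 - (ε+β₂*vp)/(ε+(β₂*vp+gg)) := by
    field_simp
    ring
  rw [h3]
  linarith

lemma charpoly_eq_prod_eig {N : ℕ} {W : Matrix (Fin N) (Fin N) ℝ} (hH : W.IsHermitian) :
    W.charpoly = ∏ i, (X - C (hH.eigenvalues i)) := by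
  classical
  have hspec := hH.spectral_theorem
  set U : Matrix (Fin N) (Fin N) ℝ := (hH.eigenvectorUnitary : Matrix (Fin N) (Fin N) ℝ) with hU
  have hUU : U * star U = 1 := (Matrix.mem_unitaryGroup_iff).mp hH.eigenvectorUnitary.2
  have hdiag : (diagonal (RCLike.ofReal ∘ hH.eigenvalues) : Matrix (Fin N) (Fin N) ℝ)
      = diagonal hH.eigenvalues := by congr 1
  have key : W.charpoly = (diagonal hH.eigenvalues).charpoly := by
    rw [Matrix.charpoly, Matrix.charpoly]
    have hcm : charmatrix W
        = (C.mapMatrix U) * charmatrix (diagonal hH.eigenvalues) * (C.mapMatrix (star U)) := by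
      rw [charmatrix, charmatrix, Matrix.mul_sub, Matrix.sub_mul]
      congr 1
      · have h1 : (C.mapMatrix U) * (Matrix.scalar (Fin N)) (X : ℝ[X]) * (C.mapMatrix (star U))
            = (Matrix.scalar (Fin N)) (X : ℝ[X]) := by
          rw [Matrix.scalar_apply, ← smul_one_eq_diagonal, Matrix.mul_smul, Matrix.mul_one,
            Matrix.smul_mul, ← _root_.map_mul, hUU, _root_.map_one]
        rw [h1]
      · rw [← _root_.map_mul, ← _root_.map_mul]
        exact congrArg _ (hspec.trans (by rw [hdiag, Unitary.conjStarAlgAut_apply]))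
    rw [hcm, det_mul, det_mul]
    have h2 : (C.mapMatrix U).det * (C.mapMatrix (star U)).det = 1 := by
      rw [← RingHom.map_det, ← RingHom.map_det, ← _root_.map_mul, ← det_mul, hUU, det_one, _root_.map_one]
    calc (C.mapMatrix U).det * (charmatrix (diagonal hH.eigenvalues)).det * (C.mapMatrix (star U)).det
        = (charmatrix (diagonal hH.eigenvalues)).det * ((C.mapMatrix U).det * (C.mapMatrix (star U)).det) := by ring
      _ = _ := by rw [h2, mul_one]
  rw [key, Matrix.charpoly, charmatrix]
  have h3 : (Matrix.scalar (Fin N)) (X : ℝ[X]) - C.mapMatrix (diagonal hH.eigenvalues)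
      = diagonal (fun i => X - C (hH.eigenvalues i)) := by
    rw [Matrix.scalar_apply, RingHom.mapMatrix_apply, Matrix.diagonal_map (map_zero C),
      diagonal_sub]
  rw [h3, det_diagonal]

lemma spectral_contract {N : ℕ} (hN : 0 < N) (W : Matrix (Fin N) (Fin N) ℝ)
    (hWsymm : W.IsSymm)
    (hWrow : ∀ i, ∑ j, W i j = 1)
    (eig : Fin N → ℝ)
    (heig : W.charpoly = ∏ i, (X - C (eig i)))
    (h1 : ∀ k, eig k = 1 ↔ k = ⟨0, hN⟩)
    (lam : ℝ)
    (h2 : ∀ k, eig k ≠ 1 → |eig k| ≤ lam)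
    (z : Fin N → ℝ) (hz : ∑ i, z i = 0) :
    ∑ i, (∑ j, W i j * z j) ^ 2 ≤ lam ^ 2 * ∑ i, (z i) ^ 2 := by
  classical
  have hH : W.IsHermitian := hWsymm
  set b := hH.eigenvectorBasis with hb
  set μ := hH.eigenvalues with hμ
  set e := (WithLp.equiv 2 (Fin N → ℝ)).symm with he
  -- multiset equality of eigenvalues
  have hms : (univ.val.map eig) = (univ.val.map μ) := by
    have h := heig.symm.trans (charpoly_eq_prod_eig hH)
    have hprod : (Multiset.map (fun a => X - C a) (univ.val.map eig)).prod
        = (Multiset.map (fun a => X - C a) (univ.val.map μ)).prod := by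
      rw [Multiset.map_map, Multiset.map_map]
      simpa [Finset.prod] using h
    have := congrArg Polynomial.roots hprod
    rwa [Polynomial.roots_multiset_prod_X_sub_C, Polynomial.roots_multiset_prod_X_sub_C] at this
  -- unique index j with μ j = 1
  have hcount : Multiset.count (1:ℝ) (univ.val.map μ) = 1 := by
    rw [← hms, Multiset.count_map, ← Finset.filter_val, Finset.filter_congr (q := fun a => a = ⟨0, hN⟩)
      (fun a _ => by constructor
                     · intro h'; exact (h1 a).mp h'.symm
                     · intro h'; exact ((h1 a).mpr h').symm)]
    rw [Finset.filter_eq', if_pos (Finset.mem_univ _)]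
    simp
  obtain ⟨j, hj⟩ : ∃ j : Fin N, μ j = 1 := by
    have : (1:ℝ) ∈ univ.val.map μ := by rw [← Multiset.count_pos, hcount]; norm_num
    obtain ⟨j, _, hj⟩ := Multiset.mem_map.mp this
    exact ⟨j, hj⟩
  have huniq : ∀ k, μ k = 1 → k = j := by
    intro k hk
    by_contra hne
    have h2le : 2 ≤ Multiset.count (1:ℝ) (univ.val.map μ) := by
      rw [Multiset.count_map, ← Finset.filter_val, ← Finset.card_def]
      have hkm : k ∈ Finset.filter (fun a => (1:ℝ) = μ a) univ := by
        simp only [Finset.mem_filter]; exact ⟨Finset.mem_univ _, hk.symm⟩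
      have hjm : j ∈ Finset.filter (fun a => (1:ℝ) = μ a) univ := by
        simp only [Finset.mem_filter]; exact ⟨Finset.mem_univ _, hj.symm⟩
      have := Finset.one_lt_card.mpr ⟨k, hkm, j, hjm, hne⟩
      omega
    omega
  -- every eigenvalue equals some eig i
  have hμbound : ∀ k, k ≠ j → |μ k| ≤ lam := by
    intro k hk
    have hmem : μ k ∈ univ.val.map μ :=
      Multiset.mem_map.mpr ⟨k, Finset.mem_univ_val _, rfl⟩
    rw [← hms] at hmem
    obtain ⟨i, _, hi⟩ := Multiset.mem_map.mp hmem
    have hne1 : μ k ≠ 1 := fun h => hk (huniq k h)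
    rw [← hi]
    exact h2 i (by rw [hi]; exact hne1)
  -- inner product formula
  have hinner : ∀ u w : EuclideanSpace ℝ (Fin N), (inner ℝ u w : ℝ) = ∑ i, u i * w i := by
    intro u w
    rw [PiLp.inner_apply]
    simp [RCLike.inner_apply, mul_comm]
  -- key: repr of W *ᵥ y
  have key : ∀ (y : Fin N → ℝ) (k : Fin N),
      b.repr (e (W.mulVec y)) k = μ k * b.repr (e y) k := by
    intro y k
    rw [OrthonormalBasis.repr_apply_apply, OrthonormalBasis.repr_apply_apply, hinner, hinner]
    have hWme : ∀ i, (e (W.mulVec y)) i = ∑ jj, W i jj * y jj := fun i => rfl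
    have hey : ∀ i, (e y) i = y i := fun i => rfl
    calc ∑ i, (b k) i * (e (W.mulVec y)) i
        = ∑ i, ∑ jj, W i jj * (b k) i * y jj := by
          refine Finset.sum_congr rfl fun i _ => ?_
          rw [hWme, Finset.mul_sum]
          exact Finset.sum_congr rfl fun jj _ => by ring
      _ = ∑ jj, (∑ i, W i jj * (b k) i) * y jj := by
          rw [Finset.sum_comm]
          exact Finset.sum_congr rfl fun jj _ => by rw [Finset.sum_mul]
      _ = ∑ jj, (μ k * (b k) jj) * y jj := by
          refine Finset.sum_congr rfl fun jj _ => ?_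
          have h5 : ∑ i, W i jj * (b k) i = (W.mulVec ⇑(b k)) jj := by
            simp only [Matrix.mulVec, dotProduct]
            exact Finset.sum_congr rfl fun i _ => by rw [hWsymm.apply i jj]
          rw [h5, hH.mulVec_eigenvectorBasis k]
          rfl
      _ = μ k * ∑ jj, (b k) jj * (e y) jj := by
          rw [Finset.mul_sum]
          exact Finset.sum_congr rfl fun jj _ => by rw [hey]; ring
  -- W fixes ones
  have hones : W.mulVec (fun _ => 1) = (fun _ => (1:ℝ)) := by
    funext i
    simp only [Matrix.mulVec, dotProduct, mul_one]
    exact hWrow i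
  have honesrepr : ∀ k, k ≠ j → b.repr (e (fun _ => (1:ℝ))) k = 0 := by
    intro k hk
    have hkey := key (fun _ => 1) k
    rw [hones] at hkey
    have hμne : μ k ≠ 1 := fun h => hk (huniq k h)
    have hfac : (1 - μ k) * (b.repr (e fun _ => (1:ℝ)) k) = 0 := by linarith
    rcases mul_eq_zero.mp hfac with h | h
    · exact absurd (by linarith : μ k = 1) hμne
    · exact h
  -- Parseval
  have hinner_repr : ∀ u w : EuclideanSpace ℝ (Fin N),
      ∑ i, u i * w i = ∑ k, b.repr u k * b.repr w k := by
    intro u w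
    have h := b.repr.inner_map_map u w
    rw [hinner, hinner] at h
    exact h.symm
  -- z is orthogonal to the 1-eigenvector
  have hreprz : b.repr (e z) j = 0 := by
    have h0 : ∑ i, (e fun _ => (1:ℝ)) i * (e z) i = 0 := by
      have hterm : ∀ i : Fin N, (e fun _ => (1:ℝ)) i * (e z) i = z i := fun i => one_mul (z i)
      rw [Finset.sum_congr rfl fun i _ => hterm i]
      exact hz
    rw [hinner_repr] at h0
    have hsingle : ∑ k, b.repr (e fun _ => (1:ℝ)) k * b.repr (e z) k
        = b.repr (e fun _ => (1:ℝ)) j * b.repr (e z) j :=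
      Finset.sum_eq_single j (fun k _ hk => by rw [honesrepr k hk, zero_mul]) (by simp)
    rw [hsingle] at h0
    have honesne : b.repr (e fun _ => (1:ℝ)) j ≠ 0 := by
      intro hcontra
      have hall : ∀ k, b.repr (e fun _ => (1:ℝ)) k = 0 := by
        intro k
        by_cases h : k = j
        · rw [h]; exact hcontra
        · exact honesrepr k h
      have hzero : (e fun _ => (1:ℝ)) = 0 := by
        have : b.repr (e fun _ => (1:ℝ)) = 0 := by
          ext k; exact hall k
        have := congrArg b.repr.symm this
        rwa [LinearIsometryEquiv.symm_apply_apply, map_zero] at this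
      have : (1:ℝ) = 0 := congrFun congr(⇑$hzero) ⟨0, hN⟩
      norm_num at this
    rcases mul_eq_zero.mp h0 with h | h
    · exact absurd h honesne
    · exact h
  -- sum of squares via repr
  have hsq : ∀ u : EuclideanSpace ℝ (Fin N), ∑ i, (u i)^2 = ∑ k, (b.repr u k)^2 := by
    intro u
    have := hinner_repr u u
    simpa [sq] using this
  have hLHS : ∑ i, (∑ jj, W i jj * z jj) ^ 2 = ∑ k, (μ k * b.repr (e z) k)^2 := by
    have h6 := hsq (e (W.mulVec z))
    have h7 : ∀ i, (e (W.mulVec z)) i = ∑ jj, W i jj * z jj := fun i => rfl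
    calc ∑ i, (∑ jj, W i jj * z jj) ^ 2 = ∑ i, ((e (W.mulVec z)) i)^2 :=
          Finset.sum_congr rfl fun i _ => by rw [h7]
      _ = ∑ k, (b.repr (e (W.mulVec z)) k)^2 := h6
      _ = ∑ k, (μ k * b.repr (e z) k)^2 :=
          Finset.sum_congr rfl fun k _ => by rw [key]
  rw [hLHS]
  have hRHS : ∑ i, (z i)^2 = ∑ k, (b.repr (e z) k)^2 := by
    have := hsq (e z)
    exact this
  rw [hRHS, Finset.mul_sum]
  refine Finset.sum_le_sum fun k _ => ?_
  by_cases hk : k = j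
  · rw [hk, hreprz]
    simp
  · have habs := hμbound k hk
    have : (μ k)^2 ≤ lam^2 := by
      have := abs_nonneg (μ k)
      nlinarith [sq_abs (μ k)]
    nlinarith [sq_nonneg (b.repr (e z) k)]

lemma eucl_norm_sq {D : ℕ} (y : EuclideanSpace ℝ (Fin D)) : ‖y‖^2 = ∑ d, (y d)^2 := by
  rw [EuclideanSpace.norm_eq, Real.sq_sqrt (by positivity)]
  exact Finset.sum_congr rfl fun d _ => by rw [Real.norm_eq_abs, sq_abs]

set_option maxHeartbeats 2000000 in
lemma deterministic_core (N D T : ℕ) (hN : 1 < N) (hD : 0 < D) (hT : 1 ≤ T)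
    (α β₂ ε L R lam : ℝ)
    (hα : 0 < α) (hε : 0 < ε) (hβ₂0 : 0 < β₂) (hβ₂1 : β₂ < 1)
    (hR : Real.sqrt ε ≤ R)
    (hlam0 : 0 ≤ lam) (hlam1 : lam < 1)
    (gradF : EuclideanSpace ℝ (Fin D) → EuclideanSpace ℝ (Fin D))
    (hLip : ∀ x y, ‖gradF x - gradF y‖ ≤ L * ‖x - y‖)
    (W : Matrix (Fin N) (Fin N) ℝ)
    (hWrow : ∀ i, ∑ j, W i j = 1)
    (hWcol : ∀ j, ∑ i, W i j = 1)
    (hcontract : ∀ z : Fin N → ℝ, ∑ i, z i = 0 →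
      ∑ i, (∑ j, W i j * z j) ^ 2 ≤ lam ^ 2 * ∑ i, (z i) ^ 2)
    (x0 : EuclideanSpace ℝ (Fin D))
    (x : ℕ → Fin N → EuclideanSpace ℝ (Fin D))
    (v : ℕ → Fin N → Fin D → ℝ)
    (g : ℕ → Fin N → EuclideanSpace ℝ (Fin D))
    (hx0 : ∀ i, x 0 i = x0)
    (hv0 : ∀ i d, v 0 i d = 0)
    (hgb : ∀ t i (d : Fin D), |g (t+1) i d| ≤ R - Real.sqrt ε)
    (hv : ∀ t i (d : Fin D), v (t + 1) i d = β₂ * v t i d + (g (t + 1) i d) ^ 2)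
    (hx : ∀ t i (d : Fin D),
      x (t + 1) i d
        = -(α * Real.sqrt ((1 - β₂ ^ (t + 1)) / (1 - β₂)))
              * (g (t + 1) i d / Real.sqrt (ε + v (t + 1) i d))
            + ∑ j, W i j * x t j d) :
    (1 / (T : ℝ)) * ∑ t ∈ Finset.range T, ∑ i, ∑ d : Fin D,
        (gradF (x t i) d - gradF ((N : ℝ)⁻¹ • ∑ j, x t j) d) ^ 2
      ≤ (2 * (1 + lam ^ 2) * α ^ 2 * N * L ^ 2 * D
            / ((1 - lam ^ 2) ^ 2 * (1 - β₂)))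
          * ((1 / (T : ℝ)) * Real.log (1 + R ^ 2 / (ε * (1 - β₂))) - Real.log β₂) := by
  have hNpos : 0 < N := by omega
  have hNr : (0:ℝ) < (N:ℝ) := Nat.cast_pos.mpr hNpos
  have hTr : (0:ℝ) < (T:ℝ) := Nat.cast_pos.mpr (by omega)
  have h1β : 0 < 1 - β₂ := by linarith
  have hlam2 : 0 < 1 - lam^2 := by nlinarith
  have hlam2' : 0 < 1 + lam^2 := by nlinarith
  have hsε : 0 ≤ Real.sqrt ε := Real.sqrt_nonneg ε
  have hsε2 : Real.sqrt ε ^ 2 = ε := Real.sq_sqrt hε.le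
  -- abbreviations
  set xb : ℕ → Fin D → ℝ := fun t d => (N:ℝ)⁻¹ * ∑ j, x t j d with hxb
  set ev : ℕ → Fin N → Fin D → ℝ := fun t i d => x t i d - xb t d with hev
  set u : ℕ → Fin N → Fin D → ℝ := fun t i d =>
    -(α * Real.sqrt ((1 - β₂ ^ t) / (1 - β₂))) * (g t i d / Real.sqrt (ε + v t i d)) with hu
  set EE : ℕ → ℝ := fun t => ∑ i, ∑ d, (ev t i d)^2 with hEE
  set UU : ℕ → ℝ := fun t => ∑ i, ∑ d, (u t i d)^2 with hUU
  -- coordinates of the average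
  have hxbd : ∀ t (d : Fin D), ((N : ℝ)⁻¹ • ∑ j, x t j) d = xb t d := by
    intro t d
    rw [hxb]
    simp only [PiLp.smul_apply, smul_eq_mul]
    congr 1
    induction (univ : Finset (Fin N)) using Finset.induction with
    | empty => rfl
    | @insert a s hnot ih => rw [Finset.sum_insert hnot, Finset.sum_insert hnot]; rw [← ih]; rfl
  -- nonnegativity and bounds for v and g
  have hvnn : ∀ t i (d : Fin D), 0 ≤ v t i d := by
    intro t
    induction t with
    | zero => intro i d; rw [hv0]
    | succ t ih =>
      intro i d
      rw [hv]
      nlinarith [ih i d, sq_nonneg (g (t+1) i d), hβ₂0.le]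
  have hgsq : ∀ t i (d : Fin D), (g (t+1) i d)^2 ≤ R^2 := by
    intro t i d
    have h := hgb t i d
    have habs : 0 ≤ |g (t+1) i d| := abs_nonneg _
    nlinarith [sq_abs (g (t+1) i d), mul_nonneg hsε (sub_nonneg.mpr hR),
      mul_le_mul_of_nonneg_left h habs]
  have hvub : ∀ t i (d : Fin D), v t i d ≤ R^2/(1-β₂) := by
    have hq : (1-β₂) * (R^2/(1-β₂)) = R^2 := by field_simp
    intro t
    induction t with
    | zero => intro i d; rw [hv0]; positivity
    | succ t ih =>
      intro i d
      rw [hv]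
      nlinarith [ih i d, hgsq t i d, mul_le_mul_of_nonneg_left (ih i d) hβ₂0.le]
  -- telescoping log bound
  have htel : ∀ (n : ℕ) i (d : Fin D),
      ∑ t ∈ Finset.range n, (g (t+1) i d)^2 / (ε + v (t+1) i d)
        ≤ Real.log (1 + R^2/(ε*(1-β₂))) - n * Real.log β₂ := by
    intro n i d
    have hstep : ∀ t, (g (t+1) i d)^2 / (ε + v (t+1) i d)
        ≤ Real.log (ε + v (t+1) i d) - Real.log (ε + v t i d) - Real.log β₂ := by
      intro t
      have h := adam_log_step ε β₂ (v t i d) ((g (t+1) i d)^2) hε hβ₂0 hβ₂1.le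
        (hvnn t i d) (sq_nonneg _)
      rw [← hv t i d] at h
      exact h
    calc ∑ t ∈ Finset.range n, (g (t+1) i d)^2 / (ε + v (t+1) i d)
        ≤ ∑ t ∈ Finset.range n,
            (Real.log (ε + v (t+1) i d) - Real.log (ε + v t i d) - Real.log β₂) :=
          Finset.sum_le_sum fun t _ => hstep t
      _ = (Real.log (ε + v n i d) - Real.log (ε + v 0 i d)) - n * Real.log β₂ := by
          rw [Finset.sum_sub_distrib, Finset.sum_range_sub (fun t => Real.log (ε + v t i d)),
            Finset.sum_const, Finset.card_range, nsmul_eq_mul]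
      _ ≤ Real.log (1 + R^2/(ε*(1-β₂))) - n * Real.log β₂ := by
          have h0 : v 0 i d = 0 := hv0 i d
          have hRq : 0 < 1 + R^2/(ε*(1-β₂)) := by positivity
          have heq : ε * (1 + R^2/(ε*(1-β₂))) = ε + R^2/(1-β₂) := by
            field_simp
          have hle : ε + v n i d ≤ ε * (1 + R^2/(ε*(1-β₂))) := by
            rw [heq]; linarith [hvub n i d]
          have hlog := Real.log_le_log (by linarith [hvnn n i d]) hle
          rw [Real.log_mul hε.ne' hRq.ne'] at hlog
          rw [h0]
          simp only [add_zero]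
          linarith
  -- update square bound
  have husq : ∀ t i (d : Fin D),
      (u (t+1) i d)^2 ≤ (α^2/(1-β₂)) * ((g (t+1) i d)^2/(ε + v (t+1) i d)) := by
    intro t i d
    have hvp : 0 < ε + v (t+1) i d := by linarith [hvnn (t+1) i d]
    have hsv : Real.sqrt (ε + v (t+1) i d)^2 = ε + v (t+1) i d := Real.sq_sqrt hvp.le
    have hb1 : β₂^(t+1) ≤ 1 := pow_le_one₀ hβ₂0.le hβ₂1.le
    have hqnn : 0 ≤ (1 - β₂^(t+1))/(1-β₂) := div_nonneg (by linarith) h1β.le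
    have hsq2 : Real.sqrt ((1-β₂^(t+1))/(1-β₂))^2 = (1-β₂^(t+1))/(1-β₂) := Real.sq_sqrt hqnn
    have hexpand : (u (t+1) i d)^2
        = (α^2 * ((1-β₂^(t+1))/(1-β₂))) * ((g (t+1) i d)^2/(ε + v (t+1) i d)) := by
      have : u (t+1) i d = -(α * Real.sqrt ((1 - β₂ ^ (t+1)) / (1 - β₂)))
          * (g (t+1) i d / Real.sqrt (ε + v (t+1) i d)) := rfl
      rw [this]
      rw [mul_pow, neg_pow, mul_pow, div_pow, hsq2, hsv]
      ring
    rw [hexpand]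
    have hmono : α^2 * ((1-β₂^(t+1))/(1-β₂)) ≤ α^2/(1-β₂) := by
      have h9 : (1-β₂^(t+1))/(1-β₂) ≤ 1/(1-β₂) :=
        (div_le_div_iff₀ h1β h1β).mpr (by nlinarith [pow_nonneg hβ₂0.le (t+1)])
      calc α^2 * ((1-β₂^(t+1))/(1-β₂)) ≤ α^2 * (1/(1-β₂)) :=
            mul_le_mul_of_nonneg_left h9 (sq_nonneg α)
        _ = α^2/(1-β₂) := by ring
    exact mul_le_mul_of_nonneg_right hmono (by positivity)
  -- zero-sum of consensus errors
  have hevsum : ∀ t (d : Fin D), ∑ i, ev t i d = 0 := by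
    intro t d
    have : ∀ i : Fin N, ev t i d = x t i d - xb t d := fun i => rfl
    rw [Finset.sum_congr rfl fun i _ => this i, Finset.sum_sub_distrib, Finset.sum_const,
      Finset.card_univ, Fintype.card_fin, nsmul_eq_mul]
    have hxbd' : xb t d = (N:ℝ)⁻¹ * ∑ j, x t j d := rfl
    rw [hxbd']
    field_simp
    ring
  -- decomposition of consensus error
  have hdecomp : ∀ t i (d : Fin D), ev (t+1) i d
      = (∑ j, W i j * ev t j d) + (u (t+1) i d - (N:ℝ)⁻¹ * ∑ j, u (t+1) j d) := by
    intro t i d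
    have hxu : ∀ i : Fin N, x (t+1) i d = u (t+1) i d + ∑ j, W i j * x t j d := by
      intro i; rw [hx t i d]
    have hxbrec : xb (t+1) d = (N:ℝ)⁻¹ * ∑ j, u (t+1) j d + xb t d := by
      have h1 : xb (t+1) d = (N:ℝ)⁻¹ * ∑ i, x (t+1) i d := rfl
      have h2 : ∑ i, x (t+1) i d = ∑ i, u (t+1) i d + ∑ j, x t j d := by
        rw [Finset.sum_congr rfl fun i _ => hxu i, Finset.sum_add_distrib]
        congr 1
        rw [Finset.sum_comm]
        refine Finset.sum_congr rfl fun j _ => ?_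
        rw [← Finset.sum_mul, hWcol j, one_mul]
      rw [h1, h2, mul_add]
    have hA : ∑ j, W i j * ev t j d = (∑ j, W i j * x t j d) - xb t d := by
      have : ∀ j : Fin N, W i j * ev t j d = W i j * x t j d - W i j * xb t d := fun j => by
        have hevj : ev t j d = x t j d - xb t d := rfl
        rw [hevj]; ring
      rw [Finset.sum_congr rfl fun j _ => this j, Finset.sum_sub_distrib, ← Finset.sum_mul,
        hWrow i, one_mul]
    have hev1 : ev (t+1) i d = x (t+1) i d - xb (t+1) d := rfl
    rw [hev1, hxu i, hxbrec, hA]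
    ring
  -- the per-step recursion for EE
  have hEErec : ∀ t, EE (t+1) ≤ (2*lam^2/(1+lam^2)) * EE t + (2/(1-lam^2)) * UU (t+1) := by
    intro t
    have hcpos : 0 < (1-lam^2)/(1+lam^2) := div_pos hlam2 hlam2'
    set c := (1-lam^2)/(1+lam^2) with hc
    have hper : ∀ d : Fin D, ∑ i, (ev (t+1) i d)^2
        ≤ (2*lam^2/(1+lam^2)) * ∑ i, (ev t i d)^2 + (2/(1-lam^2)) * ∑ i, (u (t+1) i d)^2 := by
      intro d
      have hc0 : 1 + c = 2/(1+lam^2) := by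
        rw [hc]; field_simp; ring
      have hc1 : (1+c) * lam^2 = 2*lam^2/(1+lam^2) := by
        rw [hc0]; ring
      have hc2 : (1+c⁻¹) = 2/(1-lam^2) := by
        rw [hc, inv_div]; field_simp
        norm_num
      calc ∑ i, (ev (t+1) i d)^2
          = ∑ i, ((∑ j, W i j * ev t j d) + (u (t+1) i d - (N:ℝ)⁻¹ * ∑ j, u (t+1) j d))^2 :=
            Finset.sum_congr rfl fun i _ => by rw [hdecomp t i d]
        _ ≤ ∑ i, ((1+c) * (∑ j, W i j * ev t j d)^2
              + (1+c⁻¹) * (u (t+1) i d - (N:ℝ)⁻¹ * ∑ j, u (t+1) j d)^2) :=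
            Finset.sum_le_sum fun i _ => young_sq _ _ c hcpos
        _ = (1+c) * ∑ i, (∑ j, W i j * ev t j d)^2
              + (1+c⁻¹) * ∑ i, (u (t+1) i d - (N:ℝ)⁻¹ * ∑ j, u (t+1) j d)^2 := by
            rw [Finset.sum_add_distrib, ← Finset.mul_sum, ← Finset.mul_sum]
        _ ≤ (1+c) * (lam^2 * ∑ i, (ev t i d)^2) + (1+c⁻¹) * ∑ i, (u (t+1) i d)^2 := by
            refine add_le_add (mul_le_mul_of_nonneg_left (hcontract _ (hevsum t d)) (by positivity))
              (mul_le_mul_of_nonneg_left (sum_sub_mean_sq hNpos _) (by positivity))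
        _ = (2*lam^2/(1+lam^2)) * ∑ i, (ev t i d)^2 + (2/(1-lam^2)) * ∑ i, (u (t+1) i d)^2 := by
            rw [← hc1, ← hc2]; ring
    have hEEc : ∀ s : ℕ, EE s = ∑ d, ∑ i, (ev s i d)^2 := fun s => Finset.sum_comm
    have hUUc : UU (t+1) = ∑ d, ∑ i, (u (t+1) i d)^2 := Finset.sum_comm
    rw [hEEc (t+1), hEEc t, hUUc, Finset.mul_sum, Finset.mul_sum, ← Finset.sum_add_distrib]
    exact Finset.sum_le_sum fun d _ => hper d
  have hEE0 : EE 0 = 0 := by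
    have : ∀ (i : Fin N) (d : Fin D), ev 0 i d = 0 := by
      intro i d
      have h1 : ev 0 i d = x 0 i d - (N:ℝ)⁻¹ * ∑ j, x 0 j d := rfl
      rw [h1, hx0 i]
      rw [Finset.sum_congr rfl fun j (_ : j ∈ univ) => by rw [hx0 j]]
      rw [Finset.sum_const, Finset.card_univ, Fintype.card_fin, nsmul_eq_mul]
      field_simp
      ring
    simp only [hEE]
    rw [Finset.sum_congr rfl fun i _ => Finset.sum_congr rfl fun d _ => by rw [this i d]]
    simp
  have hEEnn : ∀ t, 0 ≤ EE t := fun t => Finset.sum_nonneg fun i _ =>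
    Finset.sum_nonneg fun d _ => sq_nonneg _
  have hUUnn : ∀ t, 0 ≤ UU t := fun t => Finset.sum_nonneg fun i _ =>
    Finset.sum_nonneg fun d _ => sq_nonneg _
  -- Lipschitz bound on the LHS summand
  have hlip : ∀ t, ∑ i, ∑ d : Fin D,
      (gradF (x t i) d - gradF ((N : ℝ)⁻¹ • ∑ j, x t j) d) ^ 2
        ≤ L^2 * EE t := by
    intro t
    have hper : ∀ i : Fin N, ∑ d : Fin D,
        (gradF (x t i) d - gradF ((N : ℝ)⁻¹ • ∑ j, x t j) d) ^ 2
          ≤ L^2 * ∑ d, (ev t i d)^2 := by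
      intro i
      set y1 := gradF (x t i) with hy1
      set y2 := gradF ((N : ℝ)⁻¹ • ∑ j, x t j) with hy2
      have hsub : ∀ d : Fin D, y1 d - y2 d = (y1 - y2) d := fun d => rfl
      have step1 : ∑ d : Fin D, (y1 d - y2 d)^2 = ‖y1 - y2‖^2 := by
        rw [eucl_norm_sq]
        exact Finset.sum_congr rfl fun d _ => by rw [hsub d]
      have step2 : ‖y1 - y2‖^2 ≤ (L * ‖x t i - (N : ℝ)⁻¹ • ∑ j, x t j‖)^2 := by
        have h := hLip (x t i) ((N : ℝ)⁻¹ • ∑ j, x t j)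
        exact pow_le_pow_left₀ (norm_nonneg _) h 2
      have step3 : (L * ‖x t i - (N : ℝ)⁻¹ • ∑ j, x t j‖)^2
          = L^2 * ∑ d, (ev t i d)^2 := by
        rw [mul_pow, eucl_norm_sq]
        congr 1
        refine Finset.sum_congr rfl fun d _ => ?_
        have h1 : (x t i - (N : ℝ)⁻¹ • ∑ j, x t j) d = x t i d - ((N : ℝ)⁻¹ • ∑ j, x t j) d := rfl
        have h2 : ev t i d = x t i d - xb t d := rfl
        rw [h1, hxbd t d, h2]
      rw [step1]
      rw [step3] at step2
      exact step2
    calc ∑ i, ∑ d : Fin D, (gradF (x t i) d - gradF ((N : ℝ)⁻¹ • ∑ j, x t j) d) ^ 2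
        ≤ ∑ i, L^2 * ∑ d, (ev t i d)^2 := Finset.sum_le_sum fun i _ => hper i
      _ = L^2 * EE t := by rw [← Finset.mul_sum]
  -- apply the recursion bound
  obtain ⟨T', hT'⟩ : ∃ T', T = T' + 1 := ⟨T - 1, by omega⟩
  set q : ℝ := 2*lam^2/(1+lam^2) with hq
  set c₀ : ℝ := 2/(1-lam^2) with hc₀
  have hq0 : 0 ≤ q := by positivity
  have hq1 : q < 1 := by
    rw [hq, div_lt_one hlam2']
    nlinarith
  have h1q : 0 < 1 - q := by linarith
  have hrecb := sum_rec_bound EE UU q c₀ hEE0 hEErec T'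
  have hEEsum : (1-q) * ∑ t ∈ Finset.range T, EE t ≤ c₀ * ∑ t ∈ Finset.range T', UU (t+1) := by
    rw [hT']
    have := mul_nonneg hq0 (hEEnn T')
    linarith
  -- bound the update sums
  set B : ℝ := Real.log (1 + R^2/(ε*(1-β₂))) with hB
  have hBnn : 0 ≤ B := Real.log_nonneg (le_add_of_nonneg_right (by positivity))
  have hSnn : 0 ≤ -Real.log β₂ := by
    have := Real.log_nonpos hβ₂0.le hβ₂1.le
    linarith
  have hUUsum : ∑ t ∈ Finset.range T', UU (t+1)
      ≤ (α^2/(1-β₂)) * (N * D * (B + T * (-Real.log β₂))) := by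
    have h1 : ∑ t ∈ Finset.range T', UU (t+1)
        ≤ (α^2/(1-β₂)) * ∑ i, ∑ d, ∑ t ∈ Finset.range T', (g (t+1) i d)^2/(ε + v (t+1) i d) := by
      have hswap : ∑ t ∈ Finset.range T', UU (t+1)
          = ∑ i, ∑ d, ∑ t ∈ Finset.range T', (u (t+1) i d)^2 := by
        rw [Finset.sum_comm]
        exact Finset.sum_congr rfl fun i _ => Finset.sum_comm
      rw [hswap, Finset.mul_sum]
      refine Finset.sum_le_sum fun i _ => ?_
      rw [Finset.mul_sum]
      refine Finset.sum_le_sum fun d _ => ?_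
      rw [Finset.mul_sum]
      exact Finset.sum_le_sum fun t _ => husq t i d
    have h2 : ∑ i : Fin N, ∑ d : Fin D, ∑ t ∈ Finset.range T', (g (t+1) i d)^2/(ε + v (t+1) i d)
        ≤ N * D * (B + T * (-Real.log β₂)) := by
      have hone : ∀ (i : Fin N) (d : Fin D),
          ∑ t ∈ Finset.range T', (g (t+1) i d)^2/(ε + v (t+1) i d)
            ≤ B + T * (-Real.log β₂) := by
        intro i d
        refine le_trans (htel T' i d) ?_
        have hT'le : (T' : ℝ) ≤ (T : ℝ) := by
          rw [hT']; push_cast; linarith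
        have := mul_le_mul_of_nonneg_right hT'le hSnn
        rw [hB]
        nlinarith
      calc ∑ i : Fin N, ∑ d : Fin D, ∑ t ∈ Finset.range T', (g (t+1) i d)^2/(ε + v (t+1) i d)
          ≤ ∑ i : Fin N, ∑ d : Fin D, (B + T * (-Real.log β₂)) :=
            Finset.sum_le_sum fun i _ => Finset.sum_le_sum fun d _ => hone i d
        _ = N * D * (B + T * (-Real.log β₂)) := by
            rw [Finset.sum_const, Finset.sum_const, Finset.card_univ, Finset.card_univ,
              Fintype.card_fin, Fintype.card_fin, smul_smul, nsmul_eq_mul]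
            push_cast
            ring
    calc ∑ t ∈ Finset.range T', UU (t+1)
        ≤ (α^2/(1-β₂)) * ∑ i, ∑ d, ∑ t ∈ Finset.range T', (g (t+1) i d)^2/(ε + v (t+1) i d) := h1
      _ ≤ (α^2/(1-β₂)) * (N * D * (B + T * (-Real.log β₂))) :=
          mul_le_mul_of_nonneg_left h2 (by positivity)
  -- combine everything
  have hLHS : ∑ t ∈ Finset.range T, ∑ i, ∑ d : Fin D,
      (gradF (x t i) d - gradF ((N : ℝ)⁻¹ • ∑ j, x t j) d) ^ 2
        ≤ L^2 * ((c₀ * ((α^2/(1-β₂)) * (N * D * (B + T * (-Real.log β₂)))))/(1-q)) := by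
    have step1 : ∑ t ∈ Finset.range T, ∑ i, ∑ d : Fin D,
        (gradF (x t i) d - gradF ((N : ℝ)⁻¹ • ∑ j, x t j) d) ^ 2
          ≤ L^2 * ∑ t ∈ Finset.range T, EE t := by
      rw [Finset.mul_sum]
      exact Finset.sum_le_sum fun t _ => hlip t
    have step2 : ∑ t ∈ Finset.range T, EE t
        ≤ (c₀ * ((α^2/(1-β₂)) * (N * D * (B + T * (-Real.log β₂)))))/(1-q) := by
      rw [le_div_iff₀ h1q, mul_comm _ (1-q)]
      calc (1-q) * ∑ t ∈ Finset.range T, EE t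
          ≤ c₀ * ∑ t ∈ Finset.range T', UU (t+1) := hEEsum
        _ ≤ c₀ * ((α^2/(1-β₂)) * (N * D * (B + T * (-Real.log β₂)))) :=
            mul_le_mul_of_nonneg_left hUUsum (by positivity)
    calc ∑ t ∈ Finset.range T, ∑ i, ∑ d : Fin D,
        (gradF (x t i) d - gradF ((N : ℝ)⁻¹ • ∑ j, x t j) d) ^ 2
        ≤ L^2 * ∑ t ∈ Finset.range T, EE t := step1
      _ ≤ L^2 * ((c₀ * ((α^2/(1-β₂)) * (N * D * (B + T * (-Real.log β₂)))))/(1-q)) :=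
          mul_le_mul_of_nonneg_left step2 (sq_nonneg L)
  have hfinal : (1/(T:ℝ)) * (L^2 * ((c₀ * ((α^2/(1-β₂)) * (N * D * (B + T * (-Real.log β₂)))))/(1-q)))
      = (2 * (1 + lam ^ 2) * α ^ 2 * N * L ^ 2 * D / ((1 - lam ^ 2) ^ 2 * (1 - β₂)))
          * ((1 / (T : ℝ)) * B - Real.log β₂) := by
    rw [hq, hc₀]
    have h1 : (1:ℝ) - 2*lam^2/(1+lam^2) = (1-lam^2)/(1+lam^2) := by
      field_simp; ring
    rw [h1]
    field_simp
    ring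
  calc (1 / (T : ℝ)) * ∑ t ∈ Finset.range T, ∑ i, ∑ d : Fin D,
      (gradF (x t i) d - gradF ((N : ℝ)⁻¹ • ∑ j, x t j) d) ^ 2
      ≤ (1/(T:ℝ)) * (L^2 * ((c₀ * ((α^2/(1-β₂)) * (N * D * (B + T * (-Real.log β₂)))))/(1-q))) :=
        mul_le_mul_of_nonneg_left hLHS (by positivity)
    _ = _ := by rw [hfinal]

/-- Lemma 3: the averaged consensus error is bounded under i.i.d. sampling (no momentum). -/
theorem consensus_error_bound_no_momentum
    {Ω : Type} [MeasurableSpace Ω] (μ : Measure Ω) [IsProbabilityMeasure μ]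
    {Ξ : Type} [MeasurableSpace Ξ] (𝒟 : Measure Ξ) [IsProbabilityMeasure 𝒟]
    (N D T : ℕ) (hN : 1 < N) (hD : 0 < D) (hT : 1 ≤ T)
    (α β₂ ε L R : ℝ)
    (hα : 0 < α) (hε : 0 < ε) (hβ₂0 : 0 < β₂) (hβ₂1 : β₂ < 1)
    (hR : Real.sqrt ε ≤ R)
    (ℓ : EuclideanSpace ℝ (Fin D) → Ξ → ℝ)
    (gradℓ : EuclideanSpace ℝ (Fin D) → Ξ → EuclideanSpace ℝ (Fin D))
    (F : EuclideanSpace ℝ (Fin D) → ℝ)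
    (gradF : EuclideanSpace ℝ (Fin D) → EuclideanSpace ℝ (Fin D))
    (hF : ∀ x, F x = ∫ ξ, ℓ x ξ ∂𝒟)
    (hgradℓ : ∀ ξ x, HasGradientAt (fun y => ℓ y ξ) (gradℓ x ξ) x)
    (hgradF : ∀ x, HasGradientAt F (gradF x) x)
    -- Assumption 1
    (hLip : ∀ x y, ‖gradF x - gradF y‖ ≤ L * ‖x - y‖)
    -- Assumption 2
    (hbound : ∀ᵐ ξ ∂𝒟, ∀ x (d : Fin D), |gradℓ x ξ d| ≤ R - Real.sqrt ε)
    -- i.i.d. samples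
    (ξ : ℕ → Fin N → Ω → Ξ)
    (hξmeas : ∀ t i, Measurable (ξ t i))
    (hξiid : iIndepFun (fun (p : ℕ × Fin N) ω => ξ p.1 p.2 ω) μ)
    (hξdist : ∀ t i, Measure.map (ξ t i) μ = 𝒟)
    -- Assumption 3
    (W : Matrix (Fin N) (Fin N) ℝ)
    (hWsymm : W.IsSymm)
    (hWnonneg : ∀ i j, 0 ≤ W i j)
    (hWrow : ∀ i, ∑ j, W i j = 1)
    (hWcol : ∀ j, ∑ i, W i j = 1)
    (eig : Fin N → ℝ)
    (heig : W.charpoly = ∏ i, (Polynomial.X - Polynomial.C (eig i)))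
    (hanti : Antitone eig)
    (heig1 : eig ⟨0, by omega⟩ = 1)
    (heig2 : eig ⟨1, hN⟩ < 1)
    (heiglast : -1 < eig ⟨N - 1, by omega⟩)
    (lam : ℝ) (hlam : lam = max |eig ⟨1, hN⟩| |eig ⟨N - 1, by omega⟩|)
    -- the no-momentum decentralized Adam iterates
    (x0 : EuclideanSpace ℝ (Fin D))
    (x : ℕ → Fin N → Ω → EuclideanSpace ℝ (Fin D))
    (v : ℕ → Fin N → Ω → Fin D → ℝ)
    (g : ℕ → Fin N → Ω → EuclideanSpace ℝ (Fin D))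
    (hx0 : ∀ i ω, x 0 i ω = x0)
    (hv0 : ∀ i ω d, v 0 i ω d = 0)
    (hg : ∀ t i ω, g (t + 1) i ω = gradℓ (x t i ω) (ξ (t + 1) i ω))
    (hv : ∀ t i ω (d : Fin D), v (t + 1) i ω d = β₂ * v t i ω d + (g (t + 1) i ω d) ^ 2)
    (hx : ∀ t i ω (d : Fin D),
      x (t + 1) i ω d
        = -(α * Real.sqrt ((1 - β₂ ^ (t + 1)) / (1 - β₂)))
              * (g (t + 1) i ω d / Real.sqrt (ε + v (t + 1) i ω d))
            + ∑ j, W i j * x t j ω d) :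
    ∀ᵐ ω ∂μ,
      (1 / (T : ℝ)) * ∑ t ∈ Finset.range T, ∑ i, ∑ d : Fin D,
          (gradF (x t i ω) d - gradF ((N : ℝ)⁻¹ • ∑ j, x t j ω) d) ^ 2
        ≤ (2 * (1 + lam ^ 2) * α ^ 2 * N * L ^ 2 * D
              / ((1 - lam ^ 2) ^ 2 * (1 - β₂)))
            * ((1 / (T : ℝ)) * Real.log (1 + R ^ 2 / (ε * (1 - β₂))) - Real.log β₂) := by
  classical
  have hN0 : 0 < N := by omega
  -- almost-sure bound on sampled gradients
  have hae : ∀ᵐ ω ∂μ, ∀ (t : ℕ) (i : Fin N), ∀ xx (d : Fin D),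
      |gradℓ xx (ξ t i ω) d| ≤ R - Real.sqrt ε := by
    rw [MeasureTheory.ae_all_iff]
    intro t
    rw [MeasureTheory.ae_all_iff]
    intro i
    exact (MeasureTheory.MeasurePreserving.quasiMeasurePreserving
      ⟨hξmeas t i, hξdist t i⟩).ae hbound
  -- eigenvalue facts
  have hle1 : (⟨1, hN⟩ : Fin N) ≤ ⟨N-1, by omega⟩ := by
    simp only [Fin.le_def]
    omega
  have heig1last : eig ⟨N-1, by omega⟩ ≤ eig ⟨1, hN⟩ := hanti hle1
  have habs1 : |eig ⟨1, hN⟩| < 1 := abs_lt.mpr ⟨by linarith, heig2⟩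
  have habslast : |eig ⟨N-1, by omega⟩| < 1 :=
    abs_lt.mpr ⟨heiglast, lt_of_le_of_lt heig1last heig2⟩
  have hlam1 : lam < 1 := by rw [hlam]; exact max_lt habs1 habslast
  have hlam0 : 0 ≤ lam := by
    rw [hlam]; exact le_trans (abs_nonneg _) (le_max_left _ _)
  have h1iff : ∀ k : Fin N, eig k = 1 ↔ k = ⟨0, hN0⟩ := by
    intro k
    constructor
    · intro hk
      by_contra hne
      have hk1 : (⟨1, hN⟩ : Fin N) ≤ k := by
        simp only [Fin.le_def]
        have : k.val ≠ 0 := fun h => hne (Fin.ext h)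
        omega
      have := hanti hk1
      linarith
    · intro hk
      rw [hk]
      exact heig1
  have h2abs : ∀ k : Fin N, eig k ≠ 1 → |eig k| ≤ lam := by
    intro k hk
    have hk0 : k ≠ ⟨0, hN0⟩ := fun h => hk ((h1iff k).mpr h)
    have hk1 : (⟨1, hN⟩ : Fin N) ≤ k := by
      simp only [Fin.le_def]
      have : k.val ≠ 0 := fun h => hk0 (Fin.ext h)
      omega
    have hklast : k ≤ (⟨N-1, by omega⟩ : Fin N) := by
      simp only [Fin.le_def]
      omega
    have h5 := hanti hk1
    have h6 := hanti hklast
    rw [hlam]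
    apply abs_le.mpr
    constructor
    · calc -(max |eig ⟨1, hN⟩| |eig ⟨N-1, by omega⟩|) ≤ -|eig ⟨N-1, by omega⟩| :=
            neg_le_neg (le_max_right _ _)
        _ ≤ eig ⟨N-1, by omega⟩ := neg_abs_le _
        _ ≤ eig k := h6
    · exact le_trans h5 (le_trans (le_abs_self _) (le_max_left _ _))
  have hcontract : ∀ z : Fin N → ℝ, ∑ i, z i = 0 →
      ∑ i, (∑ j, W i j * z j) ^ 2 ≤ lam ^ 2 * ∑ i, (z i) ^ 2 :=
    fun z hz => spectral_contract hN0 W hWsymm hWrow eig heig h1iff lam h2abs z hz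
  filter_upwards [hae] with ω hω
  exact deterministic_core N D T hN hD hT α β₂ ε L R lam hα hε hβ₂0 hβ₂1 hR hlam0 hlam1
    gradF hLip W hWrow hWcol hcontract x0
    (fun t i => x t i ω) (fun t i => v t i ω) (fun t i => g t i ω)
    (fun i => hx0 i ω) (fun i d => hv0 i ω d)
    (fun t i d => by show |g (t+1) i ω d| ≤ R - Real.sqrt ε
                     rw [hg t i ω]; exact hω (t+1) i (x t i ω) d)
    (fun t i d => hv t i ω d) (fun t i d => hx t i ω d)
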